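/- arXiv:1902.04182 — 10 statements merged into one kernel-verified Lean document; each statement's English description precedes it below -/
import Mathlib

section
/- Under the generalized Jordan chain hypotheses, assume additionally that Z := A − λ₀ B + (B r₁)(l₁ᵀ B) is invertible. Then for every b ∈ ℝⁿ with l₀ᵀ b = 0, the vector x := Z⁻¹ b is the unique vector in ℝⁿ satisfying both (A − λ₀ B) x = b and (l₁ᵀ B)·x = 0. -/
open Matrix

lemma vecMulVec_mulVec' {n : ℕ} (u v x : Fin n → ℝ) :
    vecMulVec u v *ᵥ x = (v ⬝ᵥ x) • u := by
  ext i
  simp [vecMulVec_apply, mulVec, dotProduct, Finset.mul_sum, mul_assoc, mul_comm,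
    mul_left_comm, Finset.sum_mul]

lemma vecMul_vecMulVec' {n : ℕ} (l u v : Fin n → ℝ) :
    l ᵥ* vecMulVec u v = (l ⬝ᵥ u) • v := by
  ext j
  simp [vecMulVec_apply, vecMul, dotProduct, Finset.sum_mul, mul_assoc]

/-- Under the generalized Jordan chain hypotheses, if
`Z := A − λ₀ B + (B r₁)(l₁ᵀ B)` is invertible, then for every `b` with `l₀ᵀ b = 0`,
the vector `x := Z⁻¹ b` is the unique vector satisfying `(A − λ₀ B) x = b` and
`(l₁ᵀ B)·x = 0`. -/
theorem stmt4 {n : ℕ} (hn : 0 < n) (A B : Matrix (Fin n) (Fin n) ℝ) (lam0 : ℝ)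
    (r0 r1 l0 l1 : Fin n → ℝ)
    (hr0 : A *ᵥ r0 = lam0 • (B *ᵥ r0))
    (hr1 : A *ᵥ r1 = lam0 • (B *ᵥ r1) + B *ᵥ r0)
    (hl0 : l0 ᵥ* (A - lam0 • B) = 0)
    (hl1 : l1 ᵥ* (A - lam0 • B) = l0 ᵥ* B)
    (hn00 : (l0 ᵥ* B) ⬝ᵥ r0 = 0)
    (hn01 : (l0 ᵥ* B) ⬝ᵥ r1 = 1)
    (hn10 : (l1 ᵥ* B) ⬝ᵥ r0 = 1)
    (hn11 : (l1 ᵥ* B) ⬝ᵥ r1 = 0)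
    (hZ : IsUnit (A - lam0 • B + vecMulVec (B *ᵥ r1) (l1 ᵥ* B))) :
    ∀ b : Fin n → ℝ, l0 ⬝ᵥ b = 0 →
      ((A - lam0 • B) *ᵥ ((A - lam0 • B + vecMulVec (B *ᵥ r1) (l1 ᵥ* B))⁻¹ *ᵥ b) = b ∧
        (l1 ᵥ* B) ⬝ᵥ ((A - lam0 • B + vecMulVec (B *ᵥ r1) (l1 ᵥ* B))⁻¹ *ᵥ b) = 0) ∧
      ∀ x : Fin n → ℝ, (A - lam0 • B) *ᵥ x = b → (l1 ᵥ* B) ⬝ᵥ x = 0 →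
        x = (A - lam0 • B + vecMulVec (B *ᵥ r1) (l1 ᵥ* B))⁻¹ *ᵥ b := by
  set M := A - lam0 • B with hM
  set u := B *ᵥ r1 with hu
  set v := l1 ᵥ* B with hv
  set Z := M + vecMulVec u v with hZdef
  have hdet : IsUnit Z.det := (isUnit_iff_isUnit_det Z).mp hZ
  have hZZinv : Z * Z⁻¹ = 1 := mul_nonsing_inv Z hdet
  have hZinvZ : Z⁻¹ * Z = 1 := nonsing_inv_mul Z hdet
  -- l0 ᵥ* Z = v
  have hl0u : l0 ⬝ᵥ u = 1 := by
    rw [hu, dotProduct_mulVec]; exact hn01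
  have hl0Z : l0 ᵥ* Z = v := by
    rw [hZdef, vecMul_add, hl0, vecMul_vecMulVec', hl0u, zero_add, one_smul]
  intro b hb
  set x := Z⁻¹ *ᵥ b with hx
  have hZx : Z *ᵥ x = b := by
    rw [hx, mulVec_mulVec, hZZinv, one_mulVec]
  have hvx : v ⬝ᵥ x = 0 := by
    have := congrArg (fun y => l0 ⬝ᵥ y) hZx
    simpa [dotProduct_mulVec, hl0Z, hb] using this
  have hZx' : M *ᵥ x + (v ⬝ᵥ x) • u = b := by
    rw [← hZx, hZdef, add_mulVec, vecMulVec_mulVec']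
  have hMx : M *ᵥ x = b := by
    rwa [hvx, zero_smul, add_zero] at hZx'
  refine ⟨⟨hMx, hvx⟩, ?_⟩
  intro y hMy hvy
  have hZy : Z *ᵥ y = b := by
    rw [hZdef, add_mulVec, vecMulVec_mulVec', hMy, hvy, zero_smul, add_zero]
  calc y = Z⁻¹ *ᵥ (Z *ᵥ y) := by rw [mulVec_mulVec, hZinvZ, one_mulVec]
    _ = Z⁻¹ *ᵥ b := by rw [hZy]
end

section
/- Under the generalized Jordan chain hypotheses and the versal deformation hypotheses, the derivative of p at t = 0 is given by p′(0) = l₀ᵀ A′(0) r₀ − λ₀ l₀ᵀ B′(0) r₀. -/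
open Matrix

lemma dotMulDeriv {n : ℕ} (u : Fin n → ℝ) (M : ℝ → Matrix (Fin n) (Fin n) ℝ)
    (v : ℝ → Fin n → ℝ) (M' : Matrix (Fin n) (Fin n) ℝ) (v' : Fin n → ℝ)
    (hM : ∀ i j, HasDerivAt (fun t => M t i j) (M' i j) 0)
    (hv : HasDerivAt v v' 0) :
    HasDerivAt (fun t => u ⬝ᵥ (M t *ᵥ v t))
      (u ⬝ᵥ (M' *ᵥ v 0) + u ⬝ᵥ (M 0 *ᵥ v')) 0 := by
  have hvj : ∀ j, HasDerivAt (fun t => v t j) (v' j) 0 := hasDerivAt_pi.mp hv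
  have h : HasDerivAt (fun t => ∑ i, u i * ∑ j, M t i j * v t j)
      (∑ i, u i * ∑ j, (M' i j * v 0 j + M 0 i j * v' j)) 0 :=
    HasDerivAt.fun_sum fun i _ =>
      (HasDerivAt.fun_sum fun j _ => (hM i j).mul (hvj j)).const_mul (u i)
  convert h using 1
  all_goals simp [dotProduct, mulVec, mul_add, Finset.mul_sum, Finset.sum_add_distrib]

/-- Under the generalized Jordan chain hypotheses and the versal deformation
hypotheses, the derivative of `p` at `t = 0` is
`p′(0) = l₀ᵀ A′(0) r₀ − λ₀ l₀ᵀ B′(0) r₀`. -/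
theorem stmt5 {n : ℕ} (hn : 0 < n)
    (A0 B0 : Matrix (Fin n) (Fin n) ℝ) (lam0 : ℝ)
    (r0 r1 l0 l1 : Fin n → ℝ)
    (hr0 : A0 *ᵥ r0 = lam0 • (B0 *ᵥ r0))
    (hr1 : A0 *ᵥ r1 = lam0 • (B0 *ᵥ r1) + B0 *ᵥ r0)
    (hl0 : l0 ᵥ* (A0 - lam0 • B0) = 0)
    (hl1 : l1 ᵥ* (A0 - lam0 • B0) = l0 ᵥ* B0)
    (hn00 : (l0 ᵥ* B0) ⬝ᵥ r0 = 0)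
    (hn01 : (l0 ᵥ* B0) ⬝ᵥ r1 = 1)
    (hn10 : (l1 ᵥ* B0) ⬝ᵥ r0 = 1)
    (hn11 : (l1 ᵥ* B0) ⬝ᵥ r1 = 0)
    -- versal deformation hypotheses
    (A B : ℝ → Matrix (Fin n) (Fin n) ℝ)
    (R0 R1 : ℝ → Fin n → ℝ) (s p : ℝ → ℝ)
    (A' B' : Matrix (Fin n) (Fin n) ℝ) (R0' R1' : Fin n → ℝ) (s' p' : ℝ)
    (hA : ∀ i j, HasDerivAt (fun t => A t i j) (A' i j) 0)
    (hB : ∀ i j, HasDerivAt (fun t => B t i j) (B' i j) 0)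
    (hR0 : HasDerivAt R0 R0' 0) (hR1 : HasDerivAt R1 R1' 0)
    (hs : HasDerivAt s s' 0) (hp : HasDerivAt p p' 0)
    (heq0 : ∀ᶠ t in nhds 0,
      A t *ᵥ R0 t = (lam0 + s t) • (B t *ᵥ R0 t) + p t • (B t *ᵥ R1 t))
    (heq1 : ∀ᶠ t in nhds 0,
      A t *ᵥ R1 t = (lam0 + s t) • (B t *ᵥ R1 t) + B t *ᵥ R0 t)
    (hA0 : A 0 = A0) (hB0 : B 0 = B0)
    (hs0 : s 0 = 0) (hp0 : p 0 = 0)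
    (hR00 : R0 0 = r0) (hR10 : R1 0 = r1) :
    p' = (l0 ᵥ* A') ⬝ᵥ r0 - lam0 * ((l0 ᵥ* B') ⬝ᵥ r0) := by
  have h1 := dotMulDeriv l0 A R0 A' R0' hA hR0
  have h2 := dotMulDeriv l0 B R0 B' R0' hB hR0
  have h3 := dotMulDeriv l0 B R1 B' R1' hB hR1
  have hlam : HasDerivAt (fun t => lam0 + s t) s' 0 := hs.const_add lam0
  have hg : HasDerivAt
      (fun t => l0 ⬝ᵥ (A t *ᵥ R0 t) - ((lam0 + s t) * (l0 ⬝ᵥ (B t *ᵥ R0 t))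
        + p t * (l0 ⬝ᵥ (B t *ᵥ R1 t))))
      ((l0 ⬝ᵥ (A' *ᵥ R0 0) + l0 ⬝ᵥ (A 0 *ᵥ R0'))
        - ((s' * (l0 ⬝ᵥ (B 0 *ᵥ R0 0)) + (lam0 + s 0) * (l0 ⬝ᵥ (B' *ᵥ R0 0) + l0 ⬝ᵥ (B 0 *ᵥ R0')))
          + (p' * (l0 ⬝ᵥ (B 0 *ᵥ R1 0)) + p 0 * (l0 ⬝ᵥ (B' *ᵥ R1 0) + l0 ⬝ᵥ (B 0 *ᵥ R1'))))) 0 :=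
    h1.sub ((hlam.mul h2).add (hp.mul h3))
  have hz : HasDerivAt
      (fun t => l0 ⬝ᵥ (A t *ᵥ R0 t) - ((lam0 + s t) * (l0 ⬝ᵥ (B t *ᵥ R0 t))
        + p t * (l0 ⬝ᵥ (B t *ᵥ R1 t)))) 0 0 := by
    refine (hasDerivAt_const (0:ℝ) (0:ℝ)).congr_of_eventuallyEq ?_
    filter_upwards [heq0] with t ht
    rw [ht]
    simp [dotProduct_add, dotProduct_smul, smul_eq_mul]
  have key := hz.unique hg
  have hlA : l0 ᵥ* A0 = lam0 • (l0 ᵥ* B0) := by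
    have h := hl0
    rw [Matrix.vecMul_sub, sub_eq_zero] at h
    rw [h]
    ext i
    simp [Matrix.vecMul, dotProduct, Finset.mul_sum, Matrix.smul_apply, mul_left_comm]
  have e1 : l0 ⬝ᵥ (A 0 *ᵥ R0') = lam0 * (l0 ⬝ᵥ (B 0 *ᵥ R0')) := by
    rw [hA0, hB0, Matrix.dotProduct_mulVec, Matrix.dotProduct_mulVec, hlA]
    simp [smul_dotProduct, smul_eq_mul]
  have e2 : l0 ⬝ᵥ (B 0 *ᵥ R0 0) = 0 := by
    rw [hB0, hR00, Matrix.dotProduct_mulVec]; exact hn00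
  have e3 : l0 ⬝ᵥ (B 0 *ᵥ R1 0) = 1 := by
    rw [hB0, hR10, Matrix.dotProduct_mulVec]; exact hn01
  rw [e1, e2, e3, hs0, hp0, hR00] at key
  rw [← Matrix.dotProduct_mulVec, ← Matrix.dotProduct_mulVec]
  linarith [key]
end

section
/- Under the generalized Jordan chain hypotheses and the versal deformation hypotheses, assume Z := A₀ − λ₀ B₀ + (B₀ r₁)(l₁ᵀ B₀) is invertible. Then the vector x₀ := s′(0) r₁ + p′(0) r₀ + Z⁻¹(λ₀ B′(0) r₀ − A′(0) r₀) satisfies the linearized deformation equation (A₀ − λ₀ B₀) x₀ = s′(0) B₀ r₀ + p′(0) B₀ r₁ + λ₀ B′(0) r₀ − A′(0) r₀. -/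
open Matrix

/-- Under the generalized Jordan chain hypotheses and the versal deformation
hypotheses, if `Z := A₀ − λ₀ B₀ + (B₀ r₁)(l₁ᵀ B₀)` is invertible, then
`x₀ := s′(0) r₁ + p′(0) r₀ + Z⁻¹(λ₀ B′(0) r₀ − A′(0) r₀)` satisfies
`(A₀ − λ₀ B₀) x₀ = s′(0) B₀ r₀ + p′(0) B₀ r₁ + λ₀ B′(0) r₀ − A′(0) r₀`. -/
theorem stmt7 {n : ℕ} (hn : 0 < n)
    (A0 B0 : Matrix (Fin n) (Fin n) ℝ) (lam0 : ℝ)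
    (r0 r1 l0 l1 : Fin n → ℝ)
    (hr0 : A0 *ᵥ r0 = lam0 • (B0 *ᵥ r0))
    (hr1 : A0 *ᵥ r1 = lam0 • (B0 *ᵥ r1) + B0 *ᵥ r0)
    (hl0 : l0 ᵥ* (A0 - lam0 • B0) = 0)
    (hl1 : l1 ᵥ* (A0 - lam0 • B0) = l0 ᵥ* B0)
    (hn00 : (l0 ᵥ* B0) ⬝ᵥ r0 = 0)
    (hn01 : (l0 ᵥ* B0) ⬝ᵥ r1 = 1)
    (hn10 : (l1 ᵥ* B0) ⬝ᵥ r0 = 1)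
    (hn11 : (l1 ᵥ* B0) ⬝ᵥ r1 = 0)
    -- versal deformation hypotheses
    (A B : ℝ → Matrix (Fin n) (Fin n) ℝ)
    (R0 R1 : ℝ → Fin n → ℝ) (s p : ℝ → ℝ)
    (A' B' : Matrix (Fin n) (Fin n) ℝ) (R0' R1' : Fin n → ℝ) (s' p' : ℝ)
    (hA : ∀ i j, HasDerivAt (fun t => A t i j) (A' i j) 0)
    (hB : ∀ i j, HasDerivAt (fun t => B t i j) (B' i j) 0)
    (hR0 : HasDerivAt R0 R0' 0) (hR1 : HasDerivAt R1 R1' 0)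
    (hs : HasDerivAt s s' 0) (hp : HasDerivAt p p' 0)
    (heq0 : ∀ᶠ t in nhds 0,
      A t *ᵥ R0 t = (lam0 + s t) • (B t *ᵥ R0 t) + p t • (B t *ᵥ R1 t))
    (heq1 : ∀ᶠ t in nhds 0,
      A t *ᵥ R1 t = (lam0 + s t) • (B t *ᵥ R1 t) + B t *ᵥ R0 t)
    (hA0 : A 0 = A0) (hB0 : B 0 = B0)
    (hs0 : s 0 = 0) (hp0 : p 0 = 0)
    (hR00 : R0 0 = r0) (hR10 : R1 0 = r1)
    (hZ : IsUnit (A0 - lam0 • B0 + vecMulVec (B0 *ᵥ r1) (l1 ᵥ* B0))) :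
    (A0 - lam0 • B0) *ᵥ
        (s' • r1 + p' • r0 +
          (A0 - lam0 • B0 + vecMulVec (B0 *ᵥ r1) (l1 ᵥ* B0))⁻¹ *ᵥ
            (lam0 • (B' *ᵥ r0) - A' *ᵥ r0)) =
      s' • (B0 *ᵥ r0) + p' • (B0 *ᵥ r1) + lam0 • (B' *ᵥ r0) - A' *ᵥ r0 := by
  set M : Matrix (Fin n) (Fin n) ℝ := A0 - lam0 • B0 with hM
  set Z : Matrix (Fin n) (Fin n) ℝ := M + vecMulVec (B0 *ᵥ r1) (l1 ᵥ* B0) with hZdef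
  set v : Fin n → ℝ := lam0 • (B' *ᵥ r0) - A' *ᵥ r0 with hv
  -- componentwise derivatives
  have hR0i := hasDerivAt_pi.mp hR0
  -- step 1: the linearized equation
  have star : A' *ᵥ r0 + A0 *ᵥ R0' =
      s' • (B0 *ᵥ r0) + lam0 • (B' *ᵥ r0) + lam0 • (B0 *ᵥ R0') + p' • (B0 *ᵥ r1) := by
    funext i
    have hf : HasDerivAt (fun t => ∑ j, A t i j * R0 t j)
        (∑ j, (A' i j * r0 j + A0 i j * R0' j)) 0 := by
      apply HasDerivAt.fun_sum
      intro j _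
      have := (hA i j).fun_mul (hR0i j)
      simpa [hA0, hR00] using this
    have hg : HasDerivAt
        (fun t => (lam0 + s t) * (∑ j, B t i j * R0 t j) + p t * (∑ j, B t i j * R1 t j))
        ((s' * (∑ j, B0 i j * r0 j) + (lam0 + s 0) * (∑ j, (B' i j * r0 j + B0 i j * R0' j)))
          + (p' * (∑ j, B0 i j * r1 j) + p 0 * (∑ j, (B' i j * r1 j + B0 i j * R1' j)))) 0 := by
      have hR1i := hasDerivAt_pi.mp hR1
      have h1 : HasDerivAt (fun t => ∑ j, B t i j * R0 t j)
          (∑ j, (B' i j * r0 j + B0 i j * R0' j)) 0 := by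
        apply HasDerivAt.fun_sum; intro j _
        simpa [hB0, hR00] using (hB i j).fun_mul (hR0i j)
      have h2 : HasDerivAt (fun t => ∑ j, B t i j * R1 t j)
          (∑ j, (B' i j * r1 j + B0 i j * R1' j)) 0 := by
        apply HasDerivAt.fun_sum; intro j _
        simpa [hB0, hR10] using (hB i j).fun_mul (hR1i j)
      have hls : HasDerivAt (fun t => lam0 + s t) s' 0 := hs.const_add lam0
      have := (hls.fun_mul h1).fun_add (hp.fun_mul h2)
      simpa [hB0, hR00, hR10] using this
    have hfg : (fun t => ∑ j, A t i j * R0 t j) =ᶠ[nhds (0:ℝ)]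
        (fun t => (lam0 + s t) * (∑ j, B t i j * R0 t j) + p t * (∑ j, B t i j * R1 t j)) := by
      filter_upwards [heq0] with t ht
      have := congrFun ht i
      simpa [mulVec, dotProduct, Pi.add_apply, Pi.smul_apply, smul_eq_mul] using this
    have huniq := hf.unique (hg.congr_of_eventuallyEq hfg)
    have hrw : ∀ (C : Matrix (Fin n) (Fin n) ℝ) (x : Fin n → ℝ), (C *ᵥ x) i = ∑ j, C i j * x j := by
      intro C x; simp [mulVec, dotProduct]
    simp only [Pi.add_apply, Pi.smul_apply, smul_eq_mul, hrw, Finset.sum_add_distrib] at huniq ⊢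
    rw [hs0, hp0] at huniq
    linarith [huniq]
  -- rearranged: M *ᵥ R0' = s' • (B0*ᵥr0) + p' • (B0*ᵥr1) + v
  have star2 : M *ᵥ R0' = s' • (B0 *ᵥ r0) + p' • (B0 *ᵥ r1) + v := by
    rw [hM, sub_mulVec, smul_mulVec]
    have : A0 *ᵥ R0' = s' • (B0 *ᵥ r0) + lam0 • (B' *ᵥ r0) + lam0 • (B0 *ᵥ R0')
        + p' • (B0 *ᵥ r1) - A' *ᵥ r0 := by
      rw [← star]; abel
    rw [this, hv]; abel
  -- p' = - l0 ⬝ᵥ v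
  have hp' : p' = -(l0 ⬝ᵥ v) := by
    have h0 : l0 ⬝ᵥ (M *ᵥ R0') = 0 := by
      rw [dotProduct_mulVec, hl0, zero_dotProduct]
    rw [star2] at h0
    simp only [dotProduct_add, dotProduct_smul, smul_eq_mul] at h0
    rw [dotProduct_mulVec l0 B0 r0, dotProduct_mulVec l0 B0 r1, hn00, hn01] at h0
    linarith
  -- matrix facts
  have hMr1 : M *ᵥ r1 = B0 *ᵥ r0 := by
    rw [hM, sub_mulVec, smul_mulVec, hr1]; abel
  have hMr0 : M *ᵥ r0 = 0 := by
    rw [hM, sub_mulVec, smul_mulVec, hr0]; abel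
  have hdet : IsUnit Z.det := (Matrix.isUnit_iff_isUnit_det Z).mp hZ
  have hZZ : Z * Z⁻¹ = 1 := Matrix.mul_nonsing_inv Z hdet
  have houter : l0 ᵥ* vecMulVec (B0 *ᵥ r1) (l1 ᵥ* B0)
      = (l0 ⬝ᵥ (B0 *ᵥ r1)) • (l1 ᵥ* B0) := by
    ext j
    simp [vecMul, vecMulVec_apply, dotProduct, Finset.sum_mul, mul_assoc]
  have hl0Z : l0 ᵥ* Z = l1 ᵥ* B0 := by
    rw [hZdef, vecMul_add, hl0, houter, dotProduct_mulVec l0 B0 r1, hn01, one_smul, zero_add]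
  have hwZi : (l1 ᵥ* B0) ᵥ* Z⁻¹ = l0 := by
    rw [← hl0Z, vecMul_vecMul, hZZ, vecMul_one]
  have houtv : ∀ (u w x : Fin n → ℝ), vecMulVec u w *ᵥ x = (w ⬝ᵥ x) • u := by
    intro u w x; ext i
    simp [mulVec, vecMulVec_apply, dotProduct, Finset.mul_sum, Finset.sum_mul,
      mul_assoc, mul_comm, mul_left_comm]
  have hdotv : (l1 ᵥ* B0) ⬝ᵥ (Z⁻¹ *ᵥ v) = -p' := by
    rw [dotProduct_mulVec, hwZi, hp', neg_neg]
  have hMZiv : M *ᵥ (Z⁻¹ *ᵥ v) = v + p' • (B0 *ᵥ r1) := by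
    have hMZ : M = Z - vecMulVec (B0 *ᵥ r1) (l1 ᵥ* B0) := by rw [hZdef]; abel
    rw [hMZ, sub_mulVec, mulVec_mulVec, hZZ, one_mulVec, houtv _ _ _, hdotv]
    module
  calc M *ᵥ (s' • r1 + p' • r0 + Z⁻¹ *ᵥ v)
      = s' • (M *ᵥ r1) + p' • (M *ᵥ r0) + M *ᵥ (Z⁻¹ *ᵥ v) := by
        rw [mulVec_add, mulVec_add, mulVec_smul, mulVec_smul]
    _ = s' • (B0 *ᵥ r0) + p' • (B0 *ᵥ r1) + v := by
        rw [hMr1, hMr0, hMZiv, smul_zero]; abel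
    _ = s' • (B0 *ᵥ r0) + p' • (B0 *ᵥ r1) + lam0 • (B' *ᵥ r0) - A' *ᵥ r0 := by
        rw [hv]; abel
end

section
/- Under the generalized Jordan chain hypotheses and the versal deformation hypotheses, assume Z := A₀ − λ₀ B₀ + (B₀ r₁)(l₁ᵀ B₀) is invertible, and set x₀ := s′(0) r₁ + p′(0) r₀ + Z⁻¹(λ₀ B′(0) r₀ − A′(0) r₀). Then the vector x₁ := s′(0) r₀ + Z⁻¹(B′(0) r₀ + B₀ x₀ − A′(0) r₁ + λ₀ B′(0) r₁) satisfies the linearized deformation equation (A₀ − λ₀ B₀) x₁ = B′(0) r₀ + B₀ x₀ + s′(0) B₀ r₁ − A′(0) r₁ + λ₀ B′(0) r₁. -/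
open Matrix

lemma vmv_mulVec {n : ℕ} (a b x : Fin n → ℝ) : vecMulVec a b *ᵥ x = (b ⬝ᵥ x) • a := by
  ext i
  simp only [vecMulVec, mulVec, dotProduct, of_apply, Pi.smul_apply, smul_eq_mul,
    Finset.sum_mul]
  exact Finset.sum_congr rfl fun j _ => by ring

lemma vecMul_vmv {n : ℕ} (l a b : Fin n → ℝ) : l ᵥ* vecMulVec a b = (l ⬝ᵥ a) • b := by
  ext j
  simp only [vecMulVec, vecMul, dotProduct, of_apply, Pi.smul_apply, smul_eq_mul,
    Finset.sum_mul]
  exact Finset.sum_congr rfl fun i _ => by ring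

lemma vecMul_smul_mat {n : ℕ} (l : Fin n → ℝ) (a : ℝ) (A : Matrix (Fin n) (Fin n) ℝ) :
    l ᵥ* (a • A) = a • (l ᵥ* A) := by
  ext j
  simp only [vecMul, dotProduct, Matrix.smul_apply, Pi.smul_apply, smul_eq_mul,
    Finset.mul_sum]
  exact Finset.sum_congr rfl fun i _ => by ring

lemma hasDerivAt_mulVec' {n : ℕ} (A : ℝ → Matrix (Fin n) (Fin n) ℝ) (R : ℝ → Fin n → ℝ)
    (A' : Matrix (Fin n) (Fin n) ℝ) (R' : Fin n → ℝ)
    (hA : ∀ i j, HasDerivAt (fun t => A t i j) (A' i j) 0)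
    (hR : HasDerivAt R R' 0) (i : Fin n) :
    HasDerivAt (fun t => (A t *ᵥ R t) i) ((A' *ᵥ R 0 + A 0 *ᵥ R') i) 0 := by
  have h : ((A' *ᵥ R 0 + A 0 *ᵥ R') i) = ∑ j, (A' i j * R 0 j + A 0 i j * R' j) := by
    simp [mulVec, dotProduct, Finset.sum_add_distrib]
  rw [h]
  have h2 : ∀ t, (A t *ᵥ R t) i = ∑ j, A t i j * R t j := fun t => rfl
  simp only [h2]
  exact HasDerivAt.fun_sum fun j _ => (hA i j).mul (hasDerivAt_pi.mp hR j)

/-- Under the generalized Jordan chain hypotheses and the versal deformation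
hypotheses, if `Z := A₀ − λ₀ B₀ + (B₀ r₁)(l₁ᵀ B₀)` is invertible and
`x₀ := s′(0) r₁ + p′(0) r₀ + Z⁻¹(λ₀ B′(0) r₀ − A′(0) r₀)`, then
`x₁ := s′(0) r₀ + Z⁻¹(B′(0) r₀ + B₀ x₀ − A′(0) r₁ + λ₀ B′(0) r₁)` satisfies
`(A₀ − λ₀ B₀) x₁ = B′(0) r₀ + B₀ x₀ + s′(0) B₀ r₁ − A′(0) r₁ + λ₀ B′(0) r₁`. -/
theorem stmt8 {n : ℕ} (hn : 0 < n)
    (A0 B0 : Matrix (Fin n) (Fin n) ℝ) (lam0 : ℝ)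
    (r0 r1 l0 l1 : Fin n → ℝ)
    (hr0 : A0 *ᵥ r0 = lam0 • (B0 *ᵥ r0))
    (hr1 : A0 *ᵥ r1 = lam0 • (B0 *ᵥ r1) + B0 *ᵥ r0)
    (hl0 : l0 ᵥ* (A0 - lam0 • B0) = 0)
    (hl1 : l1 ᵥ* (A0 - lam0 • B0) = l0 ᵥ* B0)
    (hn00 : (l0 ᵥ* B0) ⬝ᵥ r0 = 0)
    (hn01 : (l0 ᵥ* B0) ⬝ᵥ r1 = 1)
    (hn10 : (l1 ᵥ* B0) ⬝ᵥ r0 = 1)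
    (hn11 : (l1 ᵥ* B0) ⬝ᵥ r1 = 0)
    -- versal deformation hypotheses
    (A B : ℝ → Matrix (Fin n) (Fin n) ℝ)
    (R0 R1 : ℝ → Fin n → ℝ) (s p : ℝ → ℝ)
    (A' B' : Matrix (Fin n) (Fin n) ℝ) (R0' R1' : Fin n → ℝ) (s' p' : ℝ)
    (hA : ∀ i j, HasDerivAt (fun t => A t i j) (A' i j) 0)
    (hB : ∀ i j, HasDerivAt (fun t => B t i j) (B' i j) 0)
    (hR0 : HasDerivAt R0 R0' 0) (hR1 : HasDerivAt R1 R1' 0)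
    (hs : HasDerivAt s s' 0) (hp : HasDerivAt p p' 0)
    (heq0 : ∀ᶠ t in nhds 0,
      A t *ᵥ R0 t = (lam0 + s t) • (B t *ᵥ R0 t) + p t • (B t *ᵥ R1 t))
    (heq1 : ∀ᶠ t in nhds 0,
      A t *ᵥ R1 t = (lam0 + s t) • (B t *ᵥ R1 t) + B t *ᵥ R0 t)
    (hA0 : A 0 = A0) (hB0 : B 0 = B0)
    (hs0 : s 0 = 0) (hp0 : p 0 = 0)
    (hR00 : R0 0 = r0) (hR10 : R1 0 = r1)
    (hZ : IsUnit (A0 - lam0 • B0 + vecMulVec (B0 *ᵥ r1) (l1 ᵥ* B0))) :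
    (A0 - lam0 • B0) *ᵥ
        (s' • r0 +
          (A0 - lam0 • B0 + vecMulVec (B0 *ᵥ r1) (l1 ᵥ* B0))⁻¹ *ᵥ
            (B' *ᵥ r0 +
              B0 *ᵥ (s' • r1 + p' • r0 +
          (A0 - lam0 • B0 + vecMulVec (B0 *ᵥ r1) (l1 ᵥ* B0))⁻¹ *ᵥ
            (lam0 • (B' *ᵥ r0) - A' *ᵥ r0)) -
              A' *ᵥ r1 + lam0 • (B' *ᵥ r1))) =
      B' *ᵥ r0 +
        B0 *ᵥ (s' • r1 + p' • r0 +
          (A0 - lam0 • B0 + vecMulVec (B0 *ᵥ r1) (l1 ᵥ* B0))⁻¹ *ᵥ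
            (lam0 • (B' *ᵥ r0) - A' *ᵥ r0)) +
        s' • (B0 *ᵥ r1) - A' *ᵥ r1 + lam0 • (B' *ᵥ r1) := by
  -- convenient forms of the left chain equations
  have hl0' : l0 ᵥ* A0 = lam0 • (l0 ᵥ* B0) := by
    have h := hl0
    rw [vecMul_sub, vecMul_smul_mat, sub_eq_zero] at h
    exact h
  have hl1' : l1 ᵥ* A0 - lam0 • (l1 ᵥ* B0) = l0 ᵥ* B0 := by
    have h := hl1
    rwa [vecMul_sub, vecMul_smul_mat] at h
  -- abbreviations
  set M : Matrix (Fin n) (Fin n) ℝ := A0 - lam0 • B0 with hM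
  set Z : Matrix (Fin n) (Fin n) ℝ := M + vecMulVec (B0 *ᵥ r1) (l1 ᵥ* B0) with hZdef
  -- inverse facts
  have hdet : IsUnit Z.det := (isUnit_iff_isUnit_det Z).mp hZ
  have hZZi : ∀ u : Fin n → ℝ, Z *ᵥ (Z⁻¹ *ᵥ u) = u := by
    intro u
    rw [mulVec_mulVec, mul_nonsing_inv Z hdet, one_mulVec]
  -- row identities
  have hrowZ0 : l0 ᵥ* Z = l1 ᵥ* B0 := by
    rw [hZdef, vecMul_add, hl0, vecMul_vmv, dotProduct_mulVec, hn01, one_smul, zero_add]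
  have hrowZ1 : l1 ᵥ* Z = l0 ᵥ* B0 := by
    rw [hZdef, vecMul_add, hl1, vecMul_vmv, dotProduct_mulVec, hn11, zero_smul, add_zero]
  -- key dot product facts through the inverse
  have key1 : ∀ u : Fin n → ℝ, (l1 ᵥ* B0) ⬝ᵥ (Z⁻¹ *ᵥ u) = l0 ⬝ᵥ u := by
    intro u
    rw [← hrowZ0, ← dotProduct_mulVec, hZZi]
  have key2 : ∀ u : Fin n → ℝ, (l0 ᵥ* B0) ⬝ᵥ (Z⁻¹ *ᵥ u) = l1 ⬝ᵥ u := by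
    intro u
    rw [← hrowZ1, ← dotProduct_mulVec, hZZi]
  -- M applied to Z⁻¹ u
  have hMZi : ∀ u : Fin n → ℝ, M *ᵥ (Z⁻¹ *ᵥ u) = u - (l0 ⬝ᵥ u) • (B0 *ᵥ r1) := by
    intro u
    have hMe : M = Z - vecMulVec (B0 *ᵥ r1) (l1 ᵥ* B0) := by
      rw [hZdef, add_sub_cancel_right]
    rw [hMe, sub_mulVec, hZZi, vmv_mulVec, key1]
  have hMr0 : M *ᵥ r0 = 0 := by
    rw [hM, sub_mulVec, smul_mulVec, hr0, sub_self]
  -- derivative equations from the versal deformation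
  have hE0 : A' *ᵥ r0 + A0 *ᵥ R0' =
      s' • (B0 *ᵥ r0) + lam0 • (B' *ᵥ r0 + B0 *ᵥ R0') + p' • (B0 *ᵥ r1) := by
    funext i
    have hL := hasDerivAt_mulVec' A R0 A' R0' hA hR0 i
    have hBR0 := hasDerivAt_mulVec' B R0 B' R0' hB hR0 i
    have hBR1 := hasDerivAt_mulVec' B R1 B' R1' hB hR1 i
    have hR : HasDerivAt (fun t => (lam0 + s t) * (B t *ᵥ R0 t) i + p t * (B t *ᵥ R1 t) i)
        (s' * (B 0 *ᵥ R0 0) i + (lam0 + s 0) * ((B' *ᵥ R0 0 + B 0 *ᵥ R0') i)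
          + (p' * (B 0 *ᵥ R1 0) i + p 0 * ((B' *ᵥ R1 0 + B 0 *ᵥ R1') i))) 0 :=
      ((hs.const_add lam0).mul hBR0).add (hp.mul hBR1)
    have hL' : HasDerivAt (fun t => (A t *ᵥ R0 t) i)
        (s' * (B 0 *ᵥ R0 0) i + (lam0 + s 0) * ((B' *ᵥ R0 0 + B 0 *ᵥ R0') i)
          + (p' * (B 0 *ᵥ R1 0) i + p 0 * ((B' *ᵥ R1 0 + B 0 *ᵥ R1') i))) 0 :=
      hR.congr_of_eventuallyEq (heq0.mono fun t ht => by
        simp only [ht, Pi.add_apply, Pi.smul_apply, smul_eq_mul])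
    have hu := hL.unique hL'
    simp only [hA0, hB0, hR00, hR10, hs0, hp0, add_zero, zero_mul] at hu
    simp only [Pi.add_apply, Pi.smul_apply, smul_eq_mul, mul_add] at hu ⊢
    linarith [hu]
  have hE1 : A' *ᵥ r1 + A0 *ᵥ R1' =
      s' • (B0 *ᵥ r1) + lam0 • (B' *ᵥ r1 + B0 *ᵥ R1') + (B' *ᵥ r0 + B0 *ᵥ R0') := by
    funext i
    have hL := hasDerivAt_mulVec' A R1 A' R1' hA hR1 i
    have hBR0 := hasDerivAt_mulVec' B R0 B' R0' hB hR0 i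
    have hBR1 := hasDerivAt_mulVec' B R1 B' R1' hB hR1 i
    have hR : HasDerivAt (fun t => (lam0 + s t) * (B t *ᵥ R1 t) i + (B t *ᵥ R0 t) i)
        (s' * (B 0 *ᵥ R1 0) i + (lam0 + s 0) * ((B' *ᵥ R1 0 + B 0 *ᵥ R1') i)
          + (B' *ᵥ R0 0 + B 0 *ᵥ R0') i) 0 :=
      ((hs.const_add lam0).mul hBR1).add hBR0
    have hL' : HasDerivAt (fun t => (A t *ᵥ R1 t) i)
        (s' * (B 0 *ᵥ R1 0) i + (lam0 + s 0) * ((B' *ᵥ R1 0 + B 0 *ᵥ R1') i)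
          + (B' *ᵥ R0 0 + B 0 *ᵥ R0') i) 0 :=
      hR.congr_of_eventuallyEq (heq1.mono fun t ht => by
        simp only [ht, Pi.add_apply, Pi.smul_apply, smul_eq_mul])
    have hu := hL.unique hL'
    simp only [hA0, hB0, hR00, hR10, hs0, hp0, add_zero] at hu
    simp only [Pi.add_apply, Pi.smul_apply, smul_eq_mul, mul_add] at hu ⊢
    linarith [hu]
  -- scalar consequences
  have hMR0 : (l0 ᵥ* B0) ⬝ᵥ R0' = l1 ⬝ᵥ (A0 *ᵥ R0') - lam0 * (l1 ⬝ᵥ (B0 *ᵥ R0')) := by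
    rw [← hl1', sub_dotProduct, smul_dotProduct, smul_eq_mul,
      dotProduct_mulVec l1 A0 R0', dotProduct_mulVec l1 B0 R0']
  have hMR1 : l0 ⬝ᵥ (A0 *ᵥ R1') = lam0 * (l0 ⬝ᵥ (B0 *ᵥ R1')) := by
    rw [dotProduct_mulVec l0 A0 R1', dotProduct_mulVec l0 B0 R1', hl0',
      smul_dotProduct, smul_eq_mul]
  have hb : l1 ⬝ᵥ (A' *ᵥ r0) + (l0 ᵥ* B0) ⬝ᵥ R0'
      = s' + lam0 * (l1 ⬝ᵥ (B' *ᵥ r0)) := by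
    have h := congrArg (fun u => l1 ⬝ᵥ u) hE0
    simp only [dotProduct_add, dotProduct_smul, smul_eq_mul, mul_add] at h
    rw [dotProduct_mulVec l1 B0 r0, dotProduct_mulVec l1 B0 r1, hn10, hn11] at h
    rw [hMR0]
    linarith [h]
  have hc : l0 ⬝ᵥ (A' *ᵥ r1)
      = s' + lam0 * (l0 ⬝ᵥ (B' *ᵥ r1)) + l0 ⬝ᵥ (B' *ᵥ r0) + (l0 ᵥ* B0) ⬝ᵥ R0' := by
    have h := congrArg (fun u => l0 ⬝ᵥ u) hE1
    simp only [dotProduct_add, dotProduct_smul, smul_eq_mul, mul_add] at h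
    rw [dotProduct_mulVec l0 B0 r1, hn01] at h
    rw [dotProduct_mulVec l0 B0 R0'] at h
    linarith [h, hMR1]
  -- the vectors v, x₀, w
  set v : Fin n → ℝ := lam0 • (B' *ᵥ r0) - A' *ᵥ r0 with hv
  set x0 : Fin n → ℝ := s' • r1 + p' • r0 + Z⁻¹ *ᵥ v with hx0
  set w : Fin n → ℝ := B' *ᵥ r0 + B0 *ᵥ x0 - A' *ᵥ r1 + lam0 • (B' *ᵥ r1) with hw
  have hl1v : l1 ⬝ᵥ v = lam0 * (l1 ⬝ᵥ (B' *ᵥ r0)) - l1 ⬝ᵥ (A' *ᵥ r0) := by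
    rw [hv, dotProduct_sub, dotProduct_smul, smul_eq_mul]
  have hl0B0x0 : (l0 ᵥ* B0) ⬝ᵥ x0 = s' + l1 ⬝ᵥ v := by
    rw [hx0, dotProduct_add, dotProduct_add, dotProduct_smul, dotProduct_smul,
      hn01, hn00, key2, smul_eq_mul, smul_eq_mul, mul_one, mul_zero, add_zero]
  have hl0w : l0 ⬝ᵥ w = -s' := by
    rw [hw, dotProduct_add, dotProduct_sub, dotProduct_add, dotProduct_smul,
      dotProduct_mulVec l0 B0 x0, hl0B0x0, smul_eq_mul]
    rw [hc, hl1v]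
    linarith [hb]
  -- final computation
  calc M *ᵥ (s' • r0 + Z⁻¹ *ᵥ w)
      = s' • (M *ᵥ r0) + M *ᵥ (Z⁻¹ *ᵥ w) := by
        rw [mulVec_add, mulVec_smul]
    _ = w - (l0 ⬝ᵥ w) • (B0 *ᵥ r1) := by rw [hMr0, smul_zero, zero_add, hMZi]
    _ = w + s' • (B0 *ᵥ r1) := by rw [hl0w]; module
    _ = _ := by rw [hw]; module
end

section
/- Under the Rankine–Hugoniot curve hypotheses, assume additionally that λ : ℝⁿ → ℝ is differentiable, that s(ξ) = λ(U⁻(ξ)) for all ξ, and that (DF(U⁻(ξ)) − λ(U⁻(ξ)) DG(U⁻(ξ))) (U⁻)′(ξ) = 0 for all ξ (that is, (U⁻)′(ξ) is a generalized eigenvector of the pair (DF, DG) at U⁻(ξ) with eigenvalue λ(U⁻(ξ))). Then for every ξ the composite-wave equation holds: (DF(U⁺(ξ)) − λ(U⁻(ξ)) DG(U⁺(ξ))) (U⁺)′(ξ) = (∇λ(U⁻(ξ)) · (U⁻)′(ξ)) · (G(U⁺(ξ)) − G(U⁻(ξ))). -/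
open Matrix

/-- Under the Rankine–Hugoniot curve hypotheses, if moreover `s(ξ) = λ(U⁻(ξ))` and
`(DF(U⁻) − λ(U⁻) DG(U⁻))(U⁻)′ = 0` for all `ξ`, then the composite-wave equation
`(DF(U⁺) − λ(U⁻) DG(U⁺))(U⁺)′ = (∇λ(U⁻)·(U⁻)′)(G(U⁺) − G(U⁻))` holds. -/
theorem stmt10 {n : ℕ} (hn : 0 < n)
    (F G : (Fin n → ℝ) → (Fin n → ℝ))
    (DF DG : (Fin n → ℝ) → Matrix (Fin n) (Fin n) ℝ)
    (hF : Differentiable ℝ F) (hG : Differentiable ℝ G)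
    (hDF : ∀ U v, fderiv ℝ F U v = DF U *ᵥ v)
    (hDG : ∀ U v, fderiv ℝ G U v = DG U *ᵥ v)
    (Um Up : ℝ → Fin n → ℝ) (s : ℝ → ℝ)
    (Um' Up' : ℝ → Fin n → ℝ) (s' : ℝ → ℝ)
    (hUm : ∀ ξ, HasDerivAt Um (Um' ξ) ξ)
    (hUp : ∀ ξ, HasDerivAt Up (Up' ξ) ξ)
    (hs : ∀ ξ, HasDerivAt s (s' ξ) ξ)
    (hRH : ∀ ξ, F (Up ξ) - F (Um ξ) = s ξ • (G (Up ξ) - G (Um ξ)))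
    (lam : (Fin n → ℝ) → ℝ) (gradlam : (Fin n → ℝ) → Fin n → ℝ)
    (hlam : Differentiable ℝ lam)
    (hgrad : ∀ U v, fderiv ℝ lam U v = gradlam U ⬝ᵥ v)
    (hslam : ∀ ξ, s ξ = lam (Um ξ))
    (heig : ∀ ξ, (DF (Um ξ) - lam (Um ξ) • DG (Um ξ)) *ᵥ Um' ξ = 0) :
    ∀ ξ, (DF (Up ξ) - lam (Um ξ) • DG (Up ξ)) *ᵥ Up' ξ =
      (gradlam (Um ξ) ⬝ᵥ Um' ξ) • (G (Up ξ) - G (Um ξ)) := by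

  intro ξ
  have hFUp : HasDerivAt (fun t => F (Up t)) (DF (Up ξ) *ᵥ Up' ξ) ξ := by
    simpa [hDF, Function.comp_def] using (hF (Up ξ)).hasFDerivAt.comp_hasDerivAt ξ (hUp ξ)
  have hFUm : HasDerivAt (fun t => F (Um t)) (DF (Um ξ) *ᵥ Um' ξ) ξ := by
    simpa [hDF, Function.comp_def] using (hF (Um ξ)).hasFDerivAt.comp_hasDerivAt ξ (hUm ξ)
  have hGUp : HasDerivAt (fun t => G (Up t)) (DG (Up ξ) *ᵥ Up' ξ) ξ := by
    simpa [hDG, Function.comp_def] using (hG (Up ξ)).hasFDerivAt.comp_hasDerivAt ξ (hUp ξ)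
  have hGUm : HasDerivAt (fun t => G (Um t)) (DG (Um ξ) *ᵥ Um' ξ) ξ := by
    simpa [hDG, Function.comp_def] using (hG (Um ξ)).hasFDerivAt.comp_hasDerivAt ξ (hUm ξ)
  have hL : HasDerivAt (fun t => F (Up t) - F (Um t))
      (DF (Up ξ) *ᵥ Up' ξ - DF (Um ξ) *ᵥ Um' ξ) ξ := hFUp.sub hFUm
  have hR : HasDerivAt (fun t => s t • (G (Up t) - G (Um t)))
      (s' ξ • (G (Up ξ) - G (Um ξ)) + s ξ • (DG (Up ξ) *ᵥ Up' ξ - DG (Um ξ) *ᵥ Um' ξ)) ξ := by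
    rw [add_comm]
    exact (hs ξ).smul (hGUp.sub hGUm)
  have hfun : (fun t => F (Up t) - F (Um t)) = (fun t => s t • (G (Up t) - G (Um t))) :=
    funext hRH
  have key : DF (Up ξ) *ᵥ Up' ξ - DF (Um ξ) *ᵥ Um' ξ =
      s' ξ • (G (Up ξ) - G (Um ξ)) + s ξ • (DG (Up ξ) *ᵥ Up' ξ - DG (Um ξ) *ᵥ Um' ξ) :=
    hL.unique (hfun ▸ hR)
  have hs' : s' ξ = gradlam (Um ξ) ⬝ᵥ Um' ξ := by
    have hcomp : HasDerivAt (fun t => lam (Um t)) (gradlam (Um ξ) ⬝ᵥ Um' ξ) ξ := by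
      simpa [hgrad, Function.comp_def] using (hlam (Um ξ)).hasFDerivAt.comp_hasDerivAt ξ (hUm ξ)
    have hse : s = fun t => lam (Um t) := funext hslam
    exact (hse ▸ hs ξ).unique hcomp
  have heq : DF (Um ξ) *ᵥ Um' ξ = lam (Um ξ) • (DG (Um ξ) *ᵥ Um' ξ) := by
    have := heig ξ
    rw [Matrix.sub_mulVec, Matrix.smul_mulVec, sub_eq_zero] at this
    exact this
  rw [Matrix.sub_mulVec, Matrix.smul_mulVec, ← hs']
  rw [heq, hslam ξ] at key
  linear_combination (norm := module) key
end

section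
/- Under the composite-wave hypotheses, let ξ be fixed, let μ ∈ ℝ and let l ∈ ℝⁿ be a row vector satisfying lᵀ DF(U⁺(ξ)) = μ lᵀ DG(U⁺(ξ)) (a left generalized eigenvector of (DF, DG) at U⁺(ξ) with eigenvalue μ). Then (μ − λ(U⁻(ξ))) · (lᵀ DG(U⁺(ξ)) (U⁺)′(ξ)) = (∇λ(U⁻(ξ)) · (U⁻)′(ξ)) · (lᵀ (G(U⁺(ξ)) − G(U⁻(ξ)))). -/
open Matrix

/-- Under the composite-wave hypotheses, if `lᵀ DF(U⁺(ξ)) = μ lᵀ DG(U⁺(ξ))` is a left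
generalized eigenvector with eigenvalue `μ`, then
`(μ − λ(U⁻(ξ)))(lᵀ DG(U⁺(ξ))(U⁺)′(ξ)) = (∇λ(U⁻(ξ))·(U⁻)′(ξ))(lᵀ(G(U⁺(ξ)) − G(U⁻(ξ))))`. -/
theorem stmt11 {n : ℕ} (hn : 0 < n)
    (F G : (Fin n → ℝ) → (Fin n → ℝ))
    (DF DG : (Fin n → ℝ) → Matrix (Fin n) (Fin n) ℝ)
    (hF : Differentiable ℝ F) (hG : Differentiable ℝ G)
    (hDF : ∀ U v, fderiv ℝ F U v = DF U *ᵥ v)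
    (hDG : ∀ U v, fderiv ℝ G U v = DG U *ᵥ v)
    (lam : (Fin n → ℝ) → ℝ) (gradlam : (Fin n → ℝ) → Fin n → ℝ)
    (hlam : Differentiable ℝ lam)
    (hgrad : ∀ U v, fderiv ℝ lam U v = gradlam U ⬝ᵥ v)
    (Um Up : ℝ → Fin n → ℝ) (Um' Up' : ℝ → Fin n → ℝ)
    (hUm : ∀ ξ, HasDerivAt Um (Um' ξ) ξ)
    (hUp : ∀ ξ, HasDerivAt Up (Up' ξ) ξ)
    (hRH : ∀ ξ, F (Up ξ) - F (Um ξ) = lam (Um ξ) • (G (Up ξ) - G (Um ξ)))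
    (heig : ∀ ξ, (DF (Um ξ) - lam (Um ξ) • DG (Um ξ)) *ᵥ Um' ξ = 0)
    (ξ : ℝ) (μ : ℝ) (l : Fin n → ℝ)
    (hleft : l ᵥ* DF (Up ξ) = μ • (l ᵥ* DG (Up ξ))) :
    (μ - lam (Um ξ)) * ((l ᵥ* DG (Up ξ)) ⬝ᵥ Up' ξ) =
      (gradlam (Um ξ) ⬝ᵥ Um' ξ) * (l ⬝ᵥ (G (Up ξ) - G (Um ξ))) := by
  -- chain rule derivatives
  have hFUp : HasDerivAt (fun t => F (Up t)) (DF (Up ξ) *ᵥ Up' ξ) ξ := by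
    have h := (hF (Up ξ)).hasFDerivAt.comp_hasDerivAt ξ (hUp ξ)
    simpa [Function.comp_def, hDF] using h
  have hFUm : HasDerivAt (fun t => F (Um t)) (DF (Um ξ) *ᵥ Um' ξ) ξ := by
    have h := (hF (Um ξ)).hasFDerivAt.comp_hasDerivAt ξ (hUm ξ)
    simpa [Function.comp_def, hDF] using h
  have hGUp : HasDerivAt (fun t => G (Up t)) (DG (Up ξ) *ᵥ Up' ξ) ξ := by
    have h := (hG (Up ξ)).hasFDerivAt.comp_hasDerivAt ξ (hUp ξ)
    simpa [Function.comp_def, hDG] using h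
  have hGUm : HasDerivAt (fun t => G (Um t)) (DG (Um ξ) *ᵥ Um' ξ) ξ := by
    have h := (hG (Um ξ)).hasFDerivAt.comp_hasDerivAt ξ (hUm ξ)
    simpa [Function.comp_def, hDG] using h
  have hlamUm : HasDerivAt (fun t => lam (Um t)) (gradlam (Um ξ) ⬝ᵥ Um' ξ) ξ := by
    have h := (hlam (Um ξ)).hasFDerivAt.comp_hasDerivAt ξ (hUm ξ)
    simpa [Function.comp_def, hgrad] using h
  have hL : HasDerivAt (fun t => F (Up t) - F (Um t))
      (DF (Up ξ) *ᵥ Up' ξ - DF (Um ξ) *ᵥ Um' ξ) ξ := hFUp.sub hFUm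
  have hR : HasDerivAt (fun t => lam (Um t) • (G (Up t) - G (Um t)))
      ((gradlam (Um ξ) ⬝ᵥ Um' ξ) • (G (Up ξ) - G (Um ξ))
        + lam (Um ξ) • (DG (Up ξ) *ᵥ Up' ξ - DG (Um ξ) *ᵥ Um' ξ)) ξ := by
    have h := hlamUm.smul (hGUp.sub hGUm)
    rwa [add_comm] at h
  have hL' : HasDerivAt (fun t => lam (Um t) • (G (Up t) - G (Um t)))
      (DF (Up ξ) *ᵥ Up' ξ - DF (Um ξ) *ᵥ Um' ξ) ξ := by
    have : (fun t => F (Up t) - F (Um t)) = fun t => lam (Um t) • (G (Up t) - G (Um t)) :=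
      funext fun t => hRH t
    rwa [this] at hL
  have key : DF (Up ξ) *ᵥ Up' ξ - DF (Um ξ) *ᵥ Um' ξ
      = (gradlam (Um ξ) ⬝ᵥ Um' ξ) • (G (Up ξ) - G (Um ξ))
        + lam (Um ξ) • (DG (Up ξ) *ᵥ Up' ξ - DG (Um ξ) *ᵥ Um' ξ) :=
    hL'.unique hR
  -- dot with l
  have keyl := congrArg (fun v => l ⬝ᵥ v) key
  simp only [dotProduct_sub, dotProduct_add, dotProduct_smul, smul_eq_mul] at keyl
  -- rewrite l ⬝ᵥ (M *ᵥ v) as (l ᵥ* M) ⬝ᵥ v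
  rw [dotProduct_mulVec, dotProduct_mulVec, dotProduct_mulVec, dotProduct_mulVec, hleft] at keyl
  -- use heig dotted with l
  have heigl := congrArg (fun v => l ⬝ᵥ v) (heig ξ)
  simp only [sub_mulVec, smul_mulVec, dotProduct_sub, dotProduct_smul, smul_eq_mul,
    dotProduct_zero] at heigl
  rw [dotProduct_mulVec, dotProduct_mulVec] at heigl
  have h1 : (l ᵥ* DF (Um ξ)) ⬝ᵥ Um' ξ = lam (Um ξ) * ((l ᵥ* DG (Um ξ)) ⬝ᵥ Um' ξ) := by
    linarith [heigl]
  rw [smul_dotProduct, smul_eq_mul, h1] at keyl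
  simp only [dotProduct_sub] 
  ring_nf at keyl ⊢
  linarith [keyl]
end

section
/- Under the composite-wave hypotheses, let ξ be fixed, let μ ∈ ℝ and let l ∈ ℝⁿ be a row vector satisfying lᵀ DF(U⁺(ξ)) = μ lᵀ DG(U⁺(ξ)). If μ = λ(U⁻(ξ)) and ∇λ(U⁻(ξ)) · (U⁻)′(ξ) ≠ 0, then lᵀ (G(U⁺(ξ)) − G(U⁻(ξ))) = 0; that is, the vector G(U⁺(ξ)) − G(U⁻(ξ)) is orthogonal to the left eigenvector l. -/
open Matrix

/-- Under the composite-wave hypotheses, if `l` is a left generalized eigenvector of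
`(DF, DG)` at `U⁺(ξ)` with eigenvalue `μ = λ(U⁻(ξ))` and `∇λ(U⁻(ξ))·(U⁻)′(ξ) ≠ 0`,
then `lᵀ(G(U⁺(ξ)) − G(U⁻(ξ))) = 0`. -/
theorem stmt12 {n : ℕ} (hn : 0 < n)
    (F G : (Fin n → ℝ) → (Fin n → ℝ))
    (DF DG : (Fin n → ℝ) → Matrix (Fin n) (Fin n) ℝ)
    (hF : Differentiable ℝ F) (hG : Differentiable ℝ G)
    (hDF : ∀ U v, fderiv ℝ F U v = DF U *ᵥ v)
    (hDG : ∀ U v, fderiv ℝ G U v = DG U *ᵥ v)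
    (lam : (Fin n → ℝ) → ℝ) (gradlam : (Fin n → ℝ) → Fin n → ℝ)
    (hlam : Differentiable ℝ lam)
    (hgrad : ∀ U v, fderiv ℝ lam U v = gradlam U ⬝ᵥ v)
    (Um Up : ℝ → Fin n → ℝ) (Um' Up' : ℝ → Fin n → ℝ)
    (hUm : ∀ ξ, HasDerivAt Um (Um' ξ) ξ)
    (hUp : ∀ ξ, HasDerivAt Up (Up' ξ) ξ)
    (hRH : ∀ ξ, F (Up ξ) - F (Um ξ) = lam (Um ξ) • (G (Up ξ) - G (Um ξ)))
    (heig : ∀ ξ, (DF (Um ξ) - lam (Um ξ) • DG (Um ξ)) *ᵥ Um' ξ = 0)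
    (ξ : ℝ) (μ : ℝ) (l : Fin n → ℝ)
    (hleft : l ᵥ* DF (Up ξ) = μ • (l ᵥ* DG (Up ξ)))
    (hmu : μ = lam (Um ξ)) (hnz : gradlam (Um ξ) ⬝ᵥ Um' ξ ≠ 0) :
    l ⬝ᵥ (G (Up ξ) - G (Um ξ)) = 0 := by
  -- derivatives of composites
  have hFp : HasDerivAt (fun t => F (Up t)) (DF (Up ξ) *ᵥ Up' ξ) ξ := by
    simpa [hDF, Function.comp_def] using ((hF (Up ξ)).hasFDerivAt.comp_hasDerivAt ξ (hUp ξ))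
  have hFm : HasDerivAt (fun t => F (Um t)) (DF (Um ξ) *ᵥ Um' ξ) ξ := by
    simpa [hDF, Function.comp_def] using ((hF (Um ξ)).hasFDerivAt.comp_hasDerivAt ξ (hUm ξ))
  have hGp : HasDerivAt (fun t => G (Up t)) (DG (Up ξ) *ᵥ Up' ξ) ξ := by
    simpa [hDG, Function.comp_def] using ((hG (Up ξ)).hasFDerivAt.comp_hasDerivAt ξ (hUp ξ))
  have hGm : HasDerivAt (fun t => G (Um t)) (DG (Um ξ) *ᵥ Um' ξ) ξ := by
    simpa [hDG, Function.comp_def] using ((hG (Um ξ)).hasFDerivAt.comp_hasDerivAt ξ (hUm ξ))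
  have hlm : HasDerivAt (fun t => lam (Um t)) (gradlam (Um ξ) ⬝ᵥ Um' ξ) ξ := by
    simpa [hgrad, Function.comp_def] using ((hlam (Um ξ)).hasFDerivAt.comp_hasDerivAt ξ (hUm ξ))
  have h1 : HasDerivAt (fun t => F (Up t) - F (Um t))
      (DF (Up ξ) *ᵥ Up' ξ - DF (Um ξ) *ᵥ Um' ξ) ξ := hFp.sub hFm
  have h2 : HasDerivAt (fun t => lam (Um t) • (G (Up t) - G (Um t)))
      (lam (Um ξ) • (DG (Up ξ) *ᵥ Up' ξ - DG (Um ξ) *ᵥ Um' ξ) +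
        (gradlam (Um ξ) ⬝ᵥ Um' ξ) • (G (Up ξ) - G (Um ξ))) ξ :=
    hlm.smul (hGp.sub hGm)
  have heqfun : (fun t => F (Up t) - F (Um t))
      = fun t => lam (Um t) • (G (Up t) - G (Um t)) := funext hRH
  rw [heqfun] at h1
  have key := h1.unique h2
  -- dot with l
  have hdot := congrArg (fun v => l ⬝ᵥ v) key
  simp only [dotProduct_sub, dotProduct_add, dotProduct_smul, dotProduct_mulVec] at hdot
  -- eigenvector relations
  have hm : DF (Um ξ) *ᵥ Um' ξ = lam (Um ξ) • (DG (Um ξ) *ᵥ Um' ξ) := by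
    have := heig ξ
    rw [sub_mulVec, smul_mulVec, sub_eq_zero] at this
    exact this
  have hml : l ᵥ* DF (Um ξ) ⬝ᵥ Um' ξ = lam (Um ξ) * (l ᵥ* DG (Um ξ) ⬝ᵥ Um' ξ) := by
    rw [← dotProduct_mulVec, hm, ← dotProduct_mulVec]; simp [dotProduct_smul]
  have hpl : l ᵥ* DF (Up ξ) ⬝ᵥ Up' ξ = lam (Um ξ) * (l ᵥ* DG (Up ξ) ⬝ᵥ Up' ξ) := by
    rw [hleft, hmu]; simp [smul_dotProduct]
  rw [hpl, hml] at hdot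
  have hkey : (gradlam (Um ξ) ⬝ᵥ Um' ξ) * (l ⬝ᵥ (G (Up ξ) - G (Um ξ))) = 0 := by
    rw [dotProduct_sub]
    simp only [smul_eq_mul] at hdot
    linarith [hdot]
  exact (mul_eq_zero.mp hkey).resolve_left hnz
end

section
/- Under the composite-wave hypotheses, let ξ be fixed, let μ ∈ ℝ and let l ∈ ℝⁿ be a row vector satisfying lᵀ DF(U⁺(ξ)) = μ lᵀ DG(U⁺(ξ)). If lᵀ (G(U⁺(ξ)) − G(U⁻(ξ))) = 0 and lᵀ DG(U⁺(ξ)) (U⁺)′(ξ) ≠ 0, then μ = λ(U⁻(ξ)); in particular the matrix DF(U⁺(ξ)) − λ(U⁻(ξ)) DG(U⁺(ξ)) is singular. -/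
open Matrix

/-- Under the composite-wave hypotheses, if `l` is a left generalized eigenvector of
`(DF, DG)` at `U⁺(ξ)` with eigenvalue `μ`, `lᵀ(G(U⁺(ξ)) − G(U⁻(ξ))) = 0` and
`lᵀ DG(U⁺(ξ))(U⁺)′(ξ) ≠ 0`, then `μ = λ(U⁻(ξ))`; in particular the matrix
`DF(U⁺(ξ)) − λ(U⁻(ξ)) DG(U⁺(ξ))` is singular. -/
theorem stmt13 {n : ℕ} (hn : 0 < n)
    (F G : (Fin n → ℝ) → (Fin n → ℝ))
    (DF DG : (Fin n → ℝ) → Matrix (Fin n) (Fin n) ℝ)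
    (hF : Differentiable ℝ F) (hG : Differentiable ℝ G)
    (hDF : ∀ U v, fderiv ℝ F U v = DF U *ᵥ v)
    (hDG : ∀ U v, fderiv ℝ G U v = DG U *ᵥ v)
    (lam : (Fin n → ℝ) → ℝ) (gradlam : (Fin n → ℝ) → Fin n → ℝ)
    (hlam : Differentiable ℝ lam)
    (hgrad : ∀ U v, fderiv ℝ lam U v = gradlam U ⬝ᵥ v)
    (Um Up : ℝ → Fin n → ℝ) (Um' Up' : ℝ → Fin n → ℝ)
    (hUm : ∀ ξ, HasDerivAt Um (Um' ξ) ξ)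
    (hUp : ∀ ξ, HasDerivAt Up (Up' ξ) ξ)
    (hRH : ∀ ξ, F (Up ξ) - F (Um ξ) = lam (Um ξ) • (G (Up ξ) - G (Um ξ)))
    (heig : ∀ ξ, (DF (Um ξ) - lam (Um ξ) • DG (Um ξ)) *ᵥ Um' ξ = 0)
    (ξ : ℝ) (μ : ℝ) (l : Fin n → ℝ)
    (hleft : l ᵥ* DF (Up ξ) = μ • (l ᵥ* DG (Up ξ)))
    (hGorth : l ⬝ᵥ (G (Up ξ) - G (Um ξ)) = 0)
    (hnz : (l ᵥ* DG (Up ξ)) ⬝ᵥ Up' ξ ≠ 0) :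
    μ = lam (Um ξ) ∧ (DF (Up ξ) - lam (Um ξ) • DG (Up ξ)).det = 0 := by
  -- derivatives of the composed curves
  have hFUp : HasDerivAt (fun t => F (Up t)) (DF (Up ξ) *ᵥ Up' ξ) ξ := by
    have := (hF (Up ξ)).hasFDerivAt.comp_hasDerivAt ξ (hUp ξ)
    simpa [hDF, Function.comp_def] using this
  have hFUm : HasDerivAt (fun t => F (Um t)) (DF (Um ξ) *ᵥ Um' ξ) ξ := by
    have := (hF (Um ξ)).hasFDerivAt.comp_hasDerivAt ξ (hUm ξ)
    simpa [hDF, Function.comp_def] using this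
  have hGUp : HasDerivAt (fun t => G (Up t)) (DG (Up ξ) *ᵥ Up' ξ) ξ := by
    have := (hG (Up ξ)).hasFDerivAt.comp_hasDerivAt ξ (hUp ξ)
    simpa [hDG, Function.comp_def] using this
  have hGUm : HasDerivAt (fun t => G (Um t)) (DG (Um ξ) *ᵥ Um' ξ) ξ := by
    have := (hG (Um ξ)).hasFDerivAt.comp_hasDerivAt ξ (hUm ξ)
    simpa [hDG, Function.comp_def] using this
  have hlamUm : HasDerivAt (fun t => lam (Um t)) (gradlam (Um ξ) ⬝ᵥ Um' ξ) ξ := by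
    have := (hlam (Um ξ)).hasFDerivAt.comp_hasDerivAt ξ (hUm ξ)
    simpa [hgrad, Function.comp_def] using this
  -- derivative of both sides of RH
  have hd1 : HasDerivAt (fun t => F (Up t) - F (Um t))
      (DF (Up ξ) *ᵥ Up' ξ - DF (Um ξ) *ᵥ Um' ξ) ξ := hFUp.sub hFUm
  have hd2 : HasDerivAt (fun t => lam (Um t) • (G (Up t) - G (Um t)))
      ((gradlam (Um ξ) ⬝ᵥ Um' ξ) • (G (Up ξ) - G (Um ξ)) +
        lam (Um ξ) • (DG (Up ξ) *ᵥ Up' ξ - DG (Um ξ) *ᵥ Um' ξ)) ξ := by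
    have := hlamUm.smul (hGUp.sub hGUm)
    rwa [add_comm] at this
  have heqfun : (fun t => F (Up t) - F (Um t))
      = fun t => lam (Um t) • (G (Up t) - G (Um t)) := funext hRH
  rw [heqfun] at hd1
  have hder : DF (Up ξ) *ᵥ Up' ξ - DF (Um ξ) *ᵥ Um' ξ
      = (gradlam (Um ξ) ⬝ᵥ Um' ξ) • (G (Up ξ) - G (Um ξ)) +
        lam (Um ξ) • (DG (Up ξ) *ᵥ Up' ξ - DG (Um ξ) *ᵥ Um' ξ) := hd1.unique hd2
  -- heig rewritten
  have heig' : DF (Um ξ) *ᵥ Um' ξ = lam (Um ξ) • (DG (Um ξ) *ᵥ Um' ξ) := by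
    have h := heig ξ
    rw [Matrix.sub_mulVec, Matrix.smul_mulVec, sub_eq_zero] at h
    exact h
  -- dot the derivative identity with l
  have hdot := congrArg (fun v => l ⬝ᵥ v) hder
  simp only [dotProduct_add, dotProduct_smul, dotProduct_sub, hGorth, smul_eq_mul,
    mul_zero, zero_add, heig'] at hdot
  -- hdot : l ⬝ᵥ (DF (Up ξ) *ᵥ Up' ξ) - lam • (l ⬝ᵥ (DG (Um ξ) *ᵥ Um' ξ)) = ...
  have hkey : l ⬝ᵥ (DF (Up ξ) *ᵥ Up' ξ) = lam (Um ξ) * (l ⬝ᵥ (DG (Up ξ) *ᵥ Up' ξ)) := by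
    have := hdot
    ring_nf at this ⊢
    linarith [this]
  have hlhs : l ⬝ᵥ (DF (Up ξ) *ᵥ Up' ξ) = μ * (l ⬝ᵥ (DG (Up ξ) *ᵥ Up' ξ)) := by
    rw [Matrix.dotProduct_mulVec, Matrix.dotProduct_mulVec, hleft,
      smul_dotProduct, smul_eq_mul]
  have hc : (l ᵥ* DG (Up ξ)) ⬝ᵥ Up' ξ = l ⬝ᵥ (DG (Up ξ) *ᵥ Up' ξ) :=
    (Matrix.dotProduct_mulVec l (DG (Up ξ)) (Up' ξ)).symm
  have hmu : μ = lam (Um ξ) := by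
    have hc0 : l ⬝ᵥ (DG (Up ξ) *ᵥ Up' ξ) ≠ 0 := by rwa [hc] at hnz
    have : (μ - lam (Um ξ)) * (l ⬝ᵥ (DG (Up ξ) *ᵥ Up' ξ)) = 0 := by
      rw [sub_mul, ← hlhs, ← hkey, sub_self]
    rcases mul_eq_zero.mp this with h | h
    · linarith [sub_eq_zero.mp h]
    · exact absurd h hc0
  refine ⟨hmu, ?_⟩
  -- l is a left null vector of the matrix
  have hl0 : l ᵥ* (DF (Up ξ) - lam (Um ξ) • DG (Up ξ)) = 0 := by
    have : l ᵥ* (lam (Um ξ) • DG (Up ξ)) = lam (Um ξ) • (l ᵥ* DG (Up ξ)) := by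
      ext j; simp [Matrix.vecMul, dotProduct, Finset.mul_sum, mul_comm, mul_left_comm]
    rw [Matrix.vecMul_sub, this, hleft, hmu, sub_self]
  have hlne : l ≠ 0 := by
    intro h
    apply hnz
    simp [h]
  rw [← Matrix.exists_vecMul_eq_zero_iff]
  exact ⟨l, hlne, hl0⟩
end

section
/- Under the composite-wave hypotheses, let ξ be fixed. If ∇λ(U⁻(ξ)) · (U⁻)′(ξ) = 0 and (U⁺)′(ξ) ≠ 0, then det(DF(U⁺(ξ)) − λ(U⁻(ξ)) DG(U⁺(ξ))) = 0. -/
open Matrix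

/-- Under the composite-wave hypotheses, if `∇λ(U⁻(ξ))·(U⁻)′(ξ) = 0` and
`(U⁺)′(ξ) ≠ 0`, then `det(DF(U⁺(ξ)) − λ(U⁻(ξ)) DG(U⁺(ξ))) = 0`. -/
theorem stmt14 {n : ℕ} (hn : 0 < n)
    (F G : (Fin n → ℝ) → (Fin n → ℝ))
    (DF DG : (Fin n → ℝ) → Matrix (Fin n) (Fin n) ℝ)
    (hF : Differentiable ℝ F) (hG : Differentiable ℝ G)
    (hDF : ∀ U v, fderiv ℝ F U v = DF U *ᵥ v)
    (hDG : ∀ U v, fderiv ℝ G U v = DG U *ᵥ v)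
    (lam : (Fin n → ℝ) → ℝ) (gradlam : (Fin n → ℝ) → Fin n → ℝ)
    (hlam : Differentiable ℝ lam)
    (hgrad : ∀ U v, fderiv ℝ lam U v = gradlam U ⬝ᵥ v)
    (Um Up : ℝ → Fin n → ℝ) (Um' Up' : ℝ → Fin n → ℝ)
    (hUm : ∀ ξ, HasDerivAt Um (Um' ξ) ξ)
    (hUp : ∀ ξ, HasDerivAt Up (Up' ξ) ξ)
    (hRH : ∀ ξ, F (Up ξ) - F (Um ξ) = lam (Um ξ) • (G (Up ξ) - G (Um ξ)))
    (heig : ∀ ξ, (DF (Um ξ) - lam (Um ξ) • DG (Um ξ)) *ᵥ Um' ξ = 0)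
    (ξ : ℝ)
    (hzero : gradlam (Um ξ) ⬝ᵥ Um' ξ = 0) (hUp' : Up' ξ ≠ 0) :
    (DF (Up ξ) - lam (Um ξ) • DG (Up ξ)).det = 0 := by
  -- derivatives of the composites
  have hFUp : HasDerivAt (fun t => F (Up t)) (DF (Up ξ) *ᵥ Up' ξ) ξ := by
    have := (hF (Up ξ)).hasFDerivAt.comp_hasDerivAt ξ (hUp ξ)
    simpa [hDF, Function.comp_def] using this
  have hFUm : HasDerivAt (fun t => F (Um t)) (DF (Um ξ) *ᵥ Um' ξ) ξ := by
    have := (hF (Um ξ)).hasFDerivAt.comp_hasDerivAt ξ (hUm ξ)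
    simpa [hDF, Function.comp_def] using this
  have hGUp : HasDerivAt (fun t => G (Up t)) (DG (Up ξ) *ᵥ Up' ξ) ξ := by
    have := (hG (Up ξ)).hasFDerivAt.comp_hasDerivAt ξ (hUp ξ)
    simpa [hDG, Function.comp_def] using this
  have hGUm : HasDerivAt (fun t => G (Um t)) (DG (Um ξ) *ᵥ Um' ξ) ξ := by
    have := (hG (Um ξ)).hasFDerivAt.comp_hasDerivAt ξ (hUm ξ)
    simpa [hDG, Function.comp_def] using this
  have hlamUm : HasDerivAt (fun t => lam (Um t)) (0 : ℝ) ξ := by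
    have := (hlam (Um ξ)).hasFDerivAt.comp_hasDerivAt ξ (hUm ξ)
    simpa [hgrad, hzero, Function.comp_def] using this
  -- derivative of LHS of RH
  have hL : HasDerivAt (fun t => F (Up t) - F (Um t))
      (DF (Up ξ) *ᵥ Up' ξ - DF (Um ξ) *ᵥ Um' ξ) ξ := hFUp.sub hFUm
  -- derivative of RHS of RH
  have hR : HasDerivAt (fun t => lam (Um t) • (G (Up t) - G (Um t)))
      (lam (Um ξ) • (DG (Up ξ) *ᵥ Up' ξ - DG (Um ξ) *ᵥ Um' ξ)) ξ := by
    have := hlamUm.smul (hGUp.sub hGUm)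
    simp at this
    exact this
  have hL' : HasDerivAt (fun t => F (Up t) - F (Um t))
      (lam (Um ξ) • (DG (Up ξ) *ᵥ Up' ξ - DG (Um ξ) *ᵥ Um' ξ)) ξ := by
    apply hR.congr_of_eventuallyEq
    filter_upwards with t using hRH t
  have hderiv : DF (Up ξ) *ᵥ Up' ξ - DF (Um ξ) *ᵥ Um' ξ
      = lam (Um ξ) • (DG (Up ξ) *ᵥ Up' ξ - DG (Um ξ) *ᵥ Um' ξ) :=
    hL.unique hL'
  have hUmEq : DF (Um ξ) *ᵥ Um' ξ = lam (Um ξ) • (DG (Um ξ) *ᵥ Um' ξ) := by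
    have := heig ξ
    rw [Matrix.sub_mulVec, Matrix.smul_mulVec, sub_eq_zero] at this
    exact this
  have hker : (DF (Up ξ) - lam (Um ξ) • DG (Up ξ)) *ᵥ Up' ξ = 0 := by
    rw [Matrix.sub_mulVec, Matrix.smul_mulVec, sub_eq_zero]
    have : DF (Up ξ) *ᵥ Up' ξ
        = lam (Um ξ) • (DG (Up ξ) *ᵥ Up' ξ - DG (Um ξ) *ᵥ Um' ξ)
          + DF (Um ξ) *ᵥ Um' ξ := by
      rw [← hderiv]; abel
    rw [this, hUmEq, smul_sub]; abel
  exact (Matrix.exists_mulVec_eq_zero_iff).mp ⟨Up' ξ, hUp', hker⟩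
end

section
/- Let F, G : ℝⁿ → ℝⁿ be twice differentiable, let λ : ℝⁿ → ℝ be differentiable with gradient ∇λ, and let r : ℝⁿ → ℝⁿ be differentiable, such that the generalized eigenvector identity (DF(U) − λ(U) DG(U)) r(U) = 0 holds for all U in a neighborhood of a point U₀. Let l ∈ ℝⁿ be a row vector with lᵀ (DF(U₀) − λ(U₀) DG(U₀)) = 0 and lᵀ (DG(U₀) r(U₀)) ≠ 0, and write r₀ = r(U₀). Then the directional derivative of λ along r at U₀ satisfies ∇λ(U₀) · r₀ = ( lᵀ (D²F(U₀)(r₀, r₀)) − λ(U₀) lᵀ (D²G(U₀)(r₀, r₀)) ) / ( lᵀ (DG(U₀) r₀) ), where D²F(U₀)(r₀, r₀) and D²G(U₀)(r₀, r₀) denote the second derivatives (Hessian bilinear maps) of F and G at U₀ evaluated twice on r₀. -/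
open Matrix

section Aux

variable {n : ℕ}

/-- Dot product with a constant vector commutes with derivatives. -/
lemma dot_hasDerivAt (l : Fin n → ℝ) {f : ℝ → Fin n → ℝ} {f' : Fin n → ℝ} {s : ℝ}
    (h : HasDerivAt f f' s) : HasDerivAt (fun t => l ⬝ᵥ f t) (l ⬝ᵥ f') s := by
  have hj : ∀ j, HasDerivAt (fun t => f t j) (f' j) s := fun j =>
    ((ContinuousLinearMap.proj j : ((Fin n → ℝ) →L[ℝ] ℝ)).hasFDerivAt).comp_hasDerivAt s h
  simpa [dotProduct] using HasDerivAt.fun_sum (u := Finset.univ)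
    (fun j _ => HasDerivAt.const_mul (l j) (hj j))

lemma dot_sum_smul (l : Fin n → ℝ) (v : Fin n → ℝ) (w : Fin n → (Fin n → ℝ)) :
    l ⬝ᵥ (∑ i, v i • w i) = ∑ i, v i * (l ⬝ᵥ w i) := by
  simp only [dotProduct, Finset.sum_apply, Pi.smul_apply, smul_eq_mul, Finset.mul_sum]
  rw [Finset.sum_comm]
  exact Finset.sum_congr rfl fun i _ => Finset.sum_congr rfl fun j _ => by ring

lemma dot_mulVec_decomp (l : Fin n → ℝ) (M : Matrix (Fin n) (Fin n) ℝ) (v : Fin n → ℝ) :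
    l ⬝ᵥ (M *ᵥ v) = ∑ i, v i * (l ⬝ᵥ (M *ᵥ Pi.single i 1)) := by
  have h1 : ∀ i, v i * (l ⬝ᵥ (M *ᵥ Pi.single i (1:ℝ))) = ∑ j, l j * (M j i * v i) := by
    intro i
    simp only [mulVec_single_one, col_apply, mul_one, dotProduct, Finset.mul_sum]
    exact Finset.sum_congr rfl fun j _ => by ring
  calc l ⬝ᵥ (M *ᵥ v) = ∑ j, ∑ i, l j * (M j i * v i) := by
        simp only [dotProduct, mulVec, Finset.mul_sum]
    _ = ∑ i, ∑ j, l j * (M j i * v i) := by rw [Finset.sum_comm]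
    _ = ∑ i, v i * (l ⬝ᵥ (M *ᵥ Pi.single i 1)) := Finset.sum_congr rfl fun i _ => (h1 i).symm

lemma hess_decomp (D : (Fin n → ℝ) → Matrix (Fin n) (Fin n) ℝ) (U0 v w : Fin n → ℝ)
    (hd : ∀ u, DifferentiableAt ℝ (fun x => D x *ᵥ u) U0) :
    fderiv ℝ (fun x => D x *ᵥ v) U0 w
      = ∑ i, v i • fderiv ℝ (fun x => D x *ᵥ Pi.single i 1) U0 w := by
  have hfun : (fun x => D x *ᵥ v) = fun x => ∑ i, v i • (D x *ᵥ Pi.single i (1:ℝ)) := by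
    funext x
    ext j
    simp [mulVec, dotProduct, Finset.sum_apply, mul_comm]
  rw [hfun]
  rw [fderiv_fun_sum (fun i _ => (hd (Pi.single i 1)).fun_const_smul (v i))]
  simp only [ContinuousLinearMap.coe_sum', Finset.sum_apply]
  apply Finset.sum_congr rfl
  intro i _
  rw [fderiv_fun_const_smul (hd (Pi.single i 1)) (v i)]
  rfl

end Aux

/-- Formula for the directional derivative of a characteristic speed `λ` along its
eigenvector field `r` in terms of the Hessians of the flux `F` and accumulation `G`:
`∇λ(U₀)·r₀ = (lᵀ D²F(U₀)(r₀,r₀) − λ(U₀) lᵀ D²G(U₀)(r₀,r₀)) / (lᵀ DG(U₀) r₀)`. -/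
theorem stmt18 {n : ℕ} (hn : 0 < n)
    (F G : (Fin n → ℝ) → (Fin n → ℝ))
    (DF DG : (Fin n → ℝ) → Matrix (Fin n) (Fin n) ℝ)
    (HF HG : (Fin n → ℝ) → (Fin n → ℝ) → (Fin n → ℝ))
    (lam : (Fin n → ℝ) → ℝ) (gradlam : (Fin n → ℝ) → Fin n → ℝ)
    (r : (Fin n → ℝ) → (Fin n → ℝ))
    (U0 : Fin n → ℝ) (l : Fin n → ℝ)
    (hF : Differentiable ℝ F) (hG : Differentiable ℝ G)
    (hDF : ∀ U w, fderiv ℝ F U w = DF U *ᵥ w)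
    (hDG : ∀ U w, fderiv ℝ G U w = DG U *ᵥ w)
    (hF2 : ∀ v, DifferentiableAt ℝ (fun x => DF x *ᵥ v) U0)
    (hG2 : ∀ v, DifferentiableAt ℝ (fun x => DG x *ᵥ v) U0)
    (hHF : ∀ v w, fderiv ℝ (fun x => DF x *ᵥ v) U0 w = HF v w)
    (hHG : ∀ v w, fderiv ℝ (fun x => DG x *ᵥ v) U0 w = HG v w)
    (hlam : Differentiable ℝ lam)
    (hgrad : ∀ U w, fderiv ℝ lam U w = gradlam U ⬝ᵥ w)
    (hr : DifferentiableAt ℝ r U0)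
    (heig : ∀ᶠ U in nhds U0, (DF U - lam U • DG U) *ᵥ r U = 0)
    (hl : l ᵥ* (DF U0 - lam U0 • DG U0) = 0)
    (hlG : l ⬝ᵥ (DG U0 *ᵥ r U0) ≠ 0) :
    gradlam U0 ⬝ᵥ r U0 =
      (l ⬝ᵥ HF (r U0) (r U0) - lam U0 * (l ⬝ᵥ HG (r U0) (r U0))) /
        (l ⬝ᵥ (DG U0 *ᵥ r U0)) := by
  classical
  set r0 := r U0 with hr0
  set ρ' := fderiv ℝ r U0 r0 with hρ'def
  set c : ℝ → (Fin n → ℝ) := fun s => U0 + s • r0 with hcdef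
  have hc0 : c 0 = U0 := by simp [hcdef]
  have hc : HasDerivAt c r0 0 := by
    have h1 : HasDerivAt (fun s : ℝ => s • r0) ((1:ℝ) • r0) 0 :=
      (hasDerivAt_id (0:ℝ)).smul_const r0
    simpa [hcdef] using h1.const_add U0
  have hρ : HasDerivAt (fun s => r (c s)) ρ' 0 :=
    hr.hasFDerivAt.comp_hasDerivAt_of_eq 0 hc hc0.symm
  have hρi : ∀ i, HasDerivAt (fun s => r (c s) i) (ρ' i) 0 := fun i =>
    ((ContinuousLinearMap.proj i : ((Fin n → ℝ) →L[ℝ] ℝ)).hasFDerivAt).comp_hasDerivAt 0 hρ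
  have hμ : HasDerivAt (fun s => lam (c s)) (gradlam U0 ⬝ᵥ r0) 0 := by
    have := (hlam U0).hasFDerivAt.comp_hasDerivAt_of_eq 0 hc hc0.symm
    rwa [hgrad U0 r0] at this
  -- main derivative computation, done uniformly for DF/HF and DG/HG
  have key : ∀ (D : (Fin n → ℝ) → Matrix (Fin n) (Fin n) ℝ)
      (H : (Fin n → ℝ) → (Fin n → ℝ) → (Fin n → ℝ)),
      (∀ v, DifferentiableAt ℝ (fun x => D x *ᵥ v) U0) →
      (∀ v w, fderiv ℝ (fun x => D x *ᵥ v) U0 w = H v w) →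
      HasDerivAt (fun s => l ⬝ᵥ (D (c s) *ᵥ r (c s)))
        (l ⬝ᵥ (D U0 *ᵥ ρ') + l ⬝ᵥ H r0 r0) 0 := by
    intro D H hd hH
    have hg : ∀ i, HasDerivAt (fun s => l ⬝ᵥ (D (c s) *ᵥ Pi.single i 1))
        (l ⬝ᵥ H (Pi.single i 1) r0) 0 := by
      intro i
      have h2 : HasDerivAt (fun s => D (c s) *ᵥ Pi.single i 1)
          (fderiv ℝ (fun x => D x *ᵥ Pi.single i 1) U0 r0) 0 :=
        (hd (Pi.single i 1)).hasFDerivAt.comp_hasDerivAt_of_eq 0 hc hc0.symm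
      have := dot_hasDerivAt l h2
      rwa [hH] at this
    have hsum : HasDerivAt (fun s => ∑ i, r (c s) i * (l ⬝ᵥ (D (c s) *ᵥ Pi.single i 1)))
        (∑ i, (ρ' i * (l ⬝ᵥ (D U0 *ᵥ Pi.single i 1)) + r0 i * (l ⬝ᵥ H (Pi.single i 1) r0))) 0 := by
      have := HasDerivAt.fun_sum (u := Finset.univ) (fun i _ => (hρi i).fun_mul (hg i))
      simpa [hc0] using this
    have hfun : (fun s => l ⬝ᵥ (D (c s) *ᵥ r (c s)))
        = fun s => ∑ i, r (c s) i * (l ⬝ᵥ (D (c s) *ᵥ Pi.single i 1)) := by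
      funext s; exact dot_mulVec_decomp l (D (c s)) (r (c s))
    have hval : (∑ i, (ρ' i * (l ⬝ᵥ (D U0 *ᵥ Pi.single i 1))
          + r0 i * (l ⬝ᵥ H (Pi.single i 1) r0)))
        = l ⬝ᵥ (D U0 *ᵥ ρ') + l ⬝ᵥ H r0 r0 := by
      rw [Finset.sum_add_distrib, ← dot_mulVec_decomp l (D U0) ρ']
      congr 1
      have h3 : l ⬝ᵥ H r0 r0 = l ⬝ᵥ ∑ i, r0 i • H (Pi.single i 1) r0 := by
        rw [← hH r0 r0, hess_decomp D U0 r0 r0 hd]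
        congr 1
        exact Finset.sum_congr rfl fun i _ => by rw [hH]
      rw [h3, dot_sum_smul]
    rw [hfun, ← hval]
    exact hsum
  have keyF := key DF HF hF2 hHF
  have keyG := key DG HG hG2 hHG
  -- the full scalar function
  have hΦ : HasDerivAt
      (fun s => l ⬝ᵥ (DF (c s) *ᵥ r (c s)) - lam (c s) * (l ⬝ᵥ (DG (c s) *ᵥ r (c s))))
      ((l ⬝ᵥ (DF U0 *ᵥ ρ') + l ⬝ᵥ HF r0 r0)
        - ((gradlam U0 ⬝ᵥ r0) * (l ⬝ᵥ (DG U0 *ᵥ r0))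
          + lam U0 * (l ⬝ᵥ (DG U0 *ᵥ ρ') + l ⬝ᵥ HG r0 r0))) 0 := by
    have := keyF.fun_sub (hμ.fun_mul keyG)
    simpa [hc0] using this
  -- the scalar function vanishes near 0
  have hev : (fun s => l ⬝ᵥ (DF (c s) *ᵥ r (c s)) - lam (c s) * (l ⬝ᵥ (DG (c s) *ᵥ r (c s))))
      =ᶠ[nhds (0:ℝ)] fun _ => 0 := by
    have htend : Filter.Tendsto c (nhds 0) (nhds U0) := by
      have := hc.continuousAt.tendsto
      rwa [hc0] at this
    filter_upwards [htend.eventually heig] with s hs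
    have h0 : l ⬝ᵥ ((DF (c s) - lam (c s) • DG (c s)) *ᵥ r (c s)) = 0 := by
      rw [hs]; simp
    simpa [Matrix.sub_mulVec, Matrix.smul_mulVec, dotProduct_sub, dotProduct_smul,
      smul_eq_mul] using h0
  have hzero : (l ⬝ᵥ (DF U0 *ᵥ ρ') + l ⬝ᵥ HF r0 r0)
      - ((gradlam U0 ⬝ᵥ r0) * (l ⬝ᵥ (DG U0 *ᵥ r0))
        + lam U0 * (l ⬝ᵥ (DG U0 *ᵥ ρ') + l ⬝ᵥ HG r0 r0)) = 0 := by
    rw [← hΦ.deriv, hev.deriv_eq]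
    simp
  -- left eigenvector identity applied to ρ'
  have hl' : l ⬝ᵥ (DF U0 *ᵥ ρ') = lam U0 * (l ⬝ᵥ (DG U0 *ᵥ ρ')) := by
    rw [Matrix.dotProduct_mulVec, Matrix.dotProduct_mulVec]
    have h5 : l ᵥ* (lam U0 • DG U0) = lam U0 • (l ᵥ* DG U0) := by
      ext j
      simp only [vecMul, dotProduct, Matrix.smul_apply, Pi.smul_apply, smul_eq_mul,
        Finset.mul_sum]
      exact Finset.sum_congr rfl fun i _ => by ring
    have h4 : l ᵥ* DF U0 = lam U0 • (l ᵥ* DG U0) := by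
      have h := hl
      rw [Matrix.vecMul_sub, h5, sub_eq_zero] at h
      exact h
    rw [h4, smul_dotProduct, smul_eq_mul]
  rw [eq_div_iff hlG]
  linear_combination hl' - hzero
end
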